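/- Let μ be a Borel probability measure on ℂ with the property that for every λ ∈ ℂ there exists ε > 0 with Σ_{k=0}^∞ μ(B(λ, ε^k)) < ∞. Let p(λ) = ∏_{j=1}^d (λ − λ_j) be a nonzero monic polynomial with roots λ_1,…,λ_d. Then the pushforward measure ν = |p|_* μ on [0,∞) (the distribution of λ ↦ |p(λ)| under μ) has geometric decay: there exists ε₀ ∈ (0,1) such that Σ_{k=1}^∞ ν((0, ε₀^k)) < ∞. -/

import Mathlib

open MeasureTheory
open scoped ENNReal

/-- Remark 6.6: if `μ` is a Borel probability measure on `ℂ` such that around every point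
`λ` there is `ε > 0` with `Σ_k μ(B(λ, ε^k)) < ∞`, and `p(λ) = ∏_j (λ − λ_j)` is a nonzero
monic polynomial, then the pushforward of `μ` under `λ ↦ |p(λ)|` has geometric decay. -/
theorem stmt14 (μ : Measure ℂ) [IsProbabilityMeasure μ]
    (hloc : ∀ lam : ℂ, ∃ ε : ℝ, 0 < ε ∧ ∑' k : ℕ, μ (Metric.ball lam (ε ^ k)) ≠ ⊤)
    (d : ℕ) (hd : 0 < d) (roots : Fin d → ℂ) :
    ∃ ε₀ ∈ Set.Ioo (0 : ℝ) 1,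
      ∑' k : ℕ,
        (Measure.map (fun z : ℂ => ‖∏ j, (z - roots j)‖) μ)
          (Set.Ioo 0 (ε₀ ^ (k + 1))) ≠ ⊤ := by
  classical
  choose ε hεpos hεsum using fun j => hloc (roots j)
  haveI : Nonempty (Fin d) := Fin.pos_iff_nonempty.mp hd
  set m : ℝ := Finset.univ.inf' Finset.univ_nonempty (fun j => min (ε j) (1/2)) with hm
  have hm0 : 0 < m := by
    rw [hm, Finset.lt_inf'_iff]
    intro j _
    exact lt_min (hεpos j) (by norm_num)
  have hmle : ∀ j : Fin d, m ≤ ε j := fun j =>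
    le_trans (Finset.inf'_le _ (Finset.mem_univ j)) (min_le_left _ _)
  have hmhalf : m ≤ 1/2 := by
    obtain ⟨j⟩ := ‹Nonempty (Fin d)›
    exact le_trans (Finset.inf'_le _ (Finset.mem_univ j)) (min_le_right _ _)
  refine ⟨m ^ d, ⟨pow_pos hm0 d, ?_⟩, ?_⟩
  · calc m ^ d ≤ (1/2 : ℝ) ^ d := pow_le_pow_left₀ hm0.le hmhalf d
      _ < 1 := pow_lt_one₀ (by norm_num) (by norm_num) hd.ne'
  have hf : Measurable (fun z : ℂ => ‖∏ j, (z - roots j)‖) := by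
    apply Continuous.measurable
    exact continuous_norm.comp (by continuity)
  have hmap : ∀ k : ℕ,
      (Measure.map (fun z : ℂ => ‖∏ j, (z - roots j)‖) μ)
        (Set.Ioo 0 ((m ^ d) ^ (k + 1)))
      = μ ((fun z : ℂ => ‖∏ j, (z - roots j)‖) ⁻¹' Set.Ioo 0 ((m ^ d) ^ (k + 1))) :=
    fun k => Measure.map_apply hf measurableSet_Ioo
  -- key inclusion
  have hincl : ∀ k : ℕ,
      ((fun z : ℂ => ‖∏ j, (z - roots j)‖) ⁻¹' Set.Ioo 0 ((m ^ d) ^ (k + 1)))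
        ⊆ ⋃ j : Fin d, Metric.ball (roots j) (ε j ^ (k + 1)) := by
    intro k z hz
    simp only [Set.mem_preimage, Set.mem_Ioo] at hz
    by_contra hcon
    simp only [Set.mem_iUnion, not_exists, Metric.mem_ball, not_lt] at hcon
    have h1 : ∀ j : Fin d, m ^ (k + 1) ≤ ‖z - roots j‖ := by
      intro j
      have : m ^ (k + 1) ≤ ε j ^ (k + 1) :=
        pow_le_pow_left₀ hm0.le (hmle j) _
      calc m ^ (k + 1) ≤ ε j ^ (k + 1) := this
        _ ≤ dist z (roots j) := hcon j
        _ = ‖z - roots j‖ := dist_eq_norm z (roots j)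
    have h2 : (m ^ (k + 1)) ^ d ≤ ‖∏ j, (z - roots j)‖ := by
      rw [norm_prod]
      calc (m ^ (k + 1)) ^ d = ∏ _j : Fin d, m ^ (k + 1) := by
            rw [Finset.prod_const, Finset.card_univ, Fintype.card_fin]
        _ ≤ ∏ j, ‖z - roots j‖ :=
            Finset.prod_le_prod (fun j _ => pow_nonneg hm0.le _) (fun j _ => h1 j)
    have h3 : (m ^ d) ^ (k + 1) = (m ^ (k + 1)) ^ d := by ring
    exact absurd hz.2 (not_lt.mpr (h3 ▸ h2))
  -- sum bound
  have hbound : ∑' k : ℕ,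
      (Measure.map (fun z : ℂ => ‖∏ j, (z - roots j)‖) μ)
        (Set.Ioo 0 ((m ^ d) ^ (k + 1)))
      ≤ ∑ j : Fin d, ∑' k : ℕ, μ (Metric.ball (roots j) (ε j ^ (k + 1))) := by
    rw [← Summable.tsum_finsetSum (fun j _ => ENNReal.summable)]
    refine ENNReal.tsum_le_tsum (fun k => ?_)
    rw [hmap k]
    calc μ _ ≤ μ (⋃ j : Fin d, Metric.ball (roots j) (ε j ^ (k + 1))) :=
          measure_mono (hincl k)
      _ ≤ ∑ j : Fin d, μ (Metric.ball (roots j) (ε j ^ (k + 1))) := measure_iUnion_fintype_le _ _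
  refine ne_top_of_le_ne_top ?_ hbound
  refine (ENNReal.sum_lt_top.mpr (fun j _ => ?_)).ne
  have : ∑' k : ℕ, μ (Metric.ball (roots j) (ε j ^ (k + 1)))
      ≤ ∑' k : ℕ, μ (Metric.ball (roots j) (ε j ^ k)) := by
    exact ENNReal.tsum_comp_le_tsum_of_injective (add_left_injective 1)
      (fun k => μ (Metric.ball (roots j) (ε j ^ k)))
  exact lt_of_le_of_lt this (lt_top_iff_ne_top.mpr (hεsum j))
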